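/- Let g be a standard normal random variable and t > 0. Then E[S_t(g)²] ≤ e^{−t²/2}, where S_t is the soft-thresholding operator defined by S_t(x) = x + t for x < −t, S_t(x) = 0 for −t ≤ x ≤ t, and S_t(x) = x − t for x > t. -/

import Mathlib

open MeasureTheory ProbabilityTheory Real Set Filter Topology
open scoped ENNReal NNReal

noncomputable section

/-- Soft-thresholding operator. -/
def softThreshold (t x : ℝ) : ℝ :=
  if x < -t then x + t else if x ≤ t then 0 else x - t

lemma measurable_softThreshold (t : ℝ) : Measurable (softThreshold t) := by
  unfold softThreshold
  exact Measurable.ite (measurableSet_lt measurable_id measurable_const)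
    (measurable_id.add_const t)
    (Measurable.ite (measurableSet_le measurable_id measurable_const) measurable_const
      (measurable_id.sub_const t))

lemma integrable_sq_exp : Integrable (fun x : ℝ => x ^ 2 * Real.exp (-x ^ 2 / 2)) := by
  have h := integrable_rpow_mul_exp_neg_mul_sq (b := (1:ℝ)/2) (by norm_num) (s := 2) (by norm_num)
  refine h.congr (Filter.Eventually.of_forall fun x => ?_)
  have h2 : x ^ (2:ℝ) = x ^ (2:ℕ) := by
    rw [← Real.rpow_natCast x 2]; norm_num
  simp only [h2]
  norm_num
  ring_nf
  exact Or.inl trivial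

lemma integrable_exp_half : Integrable (fun x : ℝ => Real.exp (-x ^ 2 / 2)) := by
  have h := integrable_exp_neg_mul_sq (b := (1:ℝ)/2) (by norm_num)
  exact h.congr (Filter.Eventually.of_forall fun x => by
    show Real.exp (-(1/2) * x ^ 2) = Real.exp (-x ^ 2 / 2)
    congr 1; ring)

lemma integral_exp_half_Ioi : ∫ x in Ioi (0:ℝ), Real.exp (-x ^ 2 / 2)
    = Real.sqrt (2 * π) / 2 := by
  have h := integral_gaussian_Ioi ((1:ℝ)/2)
  rw [show π / ((1:ℝ)/2) = 2 * π by ring] at h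
  rw [← h]
  apply setIntegral_congr_fun measurableSet_Ioi
  intro x _
  show Real.exp (-x ^ 2 / 2) = Real.exp (-(1/2) * x ^ 2)
  congr 1
  ring

lemma hasDerivAt_aux (x : ℝ) : HasDerivAt (fun y : ℝ => -y * Real.exp (-y ^ 2 / 2))
    ((x ^ 2 - 1) * Real.exp (-x ^ 2 / 2)) x := by
  have h1 : HasDerivAt (fun y : ℝ => -y ^ 2 / 2) (-x) x := by
    have h0 := ((hasDerivAt_pow 2 x).neg.div_const 2)
    refine h0.congr_deriv ?_
    push_cast
    ring
  have hg : HasDerivAt (fun y : ℝ => Real.exp (-y ^ 2 / 2))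
      (Real.exp (-x ^ 2 / 2) * -x) x := (Real.hasDerivAt_exp _).comp x h1
  have := ((hasDerivAt_id x).neg.mul hg)
  refine this.congr_deriv ?_
  simp only [Pi.neg_apply, id_eq]
  ring

lemma tendsto_aux : Tendsto (fun x : ℝ => -x * Real.exp (-x ^ 2 / 2)) atTop (𝓝 0) := by
  have ho := rpow_mul_exp_neg_mul_sq_isLittleO_exp_neg (b := (1:ℝ)/2) (by norm_num) 1
  have hexp : Tendsto (fun x : ℝ => Real.exp (-(1/2 : ℝ) * x)) atTop (𝓝 0) := by
    have h1 : Tendsto (fun x : ℝ => x / 2) atTop atTop := tendsto_id.atTop_div_const two_pos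
    have h2 := Real.tendsto_exp_neg_atTop_nhds_zero.comp h1
    refine h2.congr fun x => ?_
    show Real.exp (-(x / 2)) = Real.exp (-(1/2) * x)
    congr 1; ring
  have h0 := ho.isBigO.trans_tendsto hexp
  have heq : (fun x : ℝ => x ^ ((1:ℝ)) * Real.exp (-(1/2) * x ^ 2))
      = fun x : ℝ => x * Real.exp (-x ^ 2 / 2) := by
    funext x
    rw [show x ^ ((1:ℝ)) = x ^ (1:ℕ) from by rw [← Real.rpow_natCast x 1]; norm_num]
    norm_num
    left; ring_nf
  rw [heq] at h0
  simpa using h0.neg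

lemma integral_sq_exp_Ioi : ∫ x in Ioi (0:ℝ), x ^ 2 * Real.exp (-x ^ 2 / 2)
    = Real.sqrt (2 * π) / 2 := by
  have hint : IntegrableOn (fun x : ℝ => (x ^ 2 - 1) * Real.exp (-x ^ 2 / 2)) (Ioi 0) := by
    have : (fun x : ℝ => (x ^ 2 - 1) * Real.exp (-x ^ 2 / 2))
        = fun x : ℝ => x ^ 2 * Real.exp (-x ^ 2 / 2) - Real.exp (-x ^ 2 / 2) := by
      funext x; ring
    rw [this]
    exact (integrable_sq_exp.sub integrable_exp_half).integrableOn
  have h := integral_Ioi_of_hasDerivAt_of_tendsto' (fun x _ => hasDerivAt_aux x) hint tendsto_aux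
  simp only [neg_zero, zero_mul] at h
  have hsub : ∫ x in Ioi (0:ℝ), (x ^ 2 * Real.exp (-x ^ 2 / 2) - Real.exp (-x ^ 2 / 2))
      = (∫ x in Ioi (0:ℝ), x ^ 2 * Real.exp (-x ^ 2 / 2)) - ∫ x in Ioi (0:ℝ), Real.exp (-x ^ 2 / 2) :=
    integral_sub integrable_sq_exp.integrableOn integrable_exp_half.integrableOn
  have heq : ∫ x in Ioi (0:ℝ), (x ^ 2 - 1) * Real.exp (-x ^ 2 / 2)
      = ∫ x in Ioi (0:ℝ), (x ^ 2 * Real.exp (-x ^ 2 / 2) - Real.exp (-x ^ 2 / 2)) := by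
    apply setIntegral_congr_fun measurableSet_Ioi
    intro x _
    ring
  rw [heq, hsub] at h
  norm_num at h
  have := integral_exp_half_Ioi
  linarith


lemma softThreshold_sq_exp_integrable (t : ℝ) :
    Integrable (fun x : ℝ =>
      softThreshold t x ^ 2 * Real.exp (-softThreshold t x ^ 2 / 2)) := by
  have hS := measurable_softThreshold t
  have hmeas : Measurable (fun x : ℝ =>
      softThreshold t x ^ 2 * Real.exp (-softThreshold t x ^ 2 / 2)) :=
    (hS.pow_const 2).mul (Real.measurable_exp.comp ((hS.pow_const 2).neg.div_const 2))
  have hg : Integrable (fun x : ℝ => (x - t) ^ 2 * Real.exp (-(x - t) ^ 2 / 2)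
      + (x + t) ^ 2 * Real.exp (-(x + t) ^ 2 / 2)) :=
    (integrable_sq_exp.comp_sub_right t).add (integrable_sq_exp.comp_add_right t)
  refine hg.mono' hmeas.aestronglyMeasurable (Filter.Eventually.of_forall fun x => ?_)
  rw [Real.norm_eq_abs, abs_of_nonneg (by positivity)]
  unfold softThreshold
  split_ifs with h1 h2
  · exact le_add_of_nonneg_left (by positivity)
  · norm_num
    positivity
  · exact le_add_of_nonneg_right (by positivity)

lemma softThreshold_pointwise (t : ℝ) (ht : 0 < t) (x : ℝ) :
    Real.exp (-x ^ 2 / 2) * softThreshold t x ^ 2 ≤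
      Real.exp (-t ^ 2 / 2) *
        (softThreshold t x ^ 2 * Real.exp (-softThreshold t x ^ 2 / 2)) := by
  unfold softThreshold
  split_ifs with h1 h2
  · have key : Real.exp (-x ^ 2 / 2) ≤ Real.exp (-t ^ 2 / 2 + -(x + t) ^ 2 / 2) := by
      apply Real.exp_le_exp.2
      nlinarith
    calc Real.exp (-x ^ 2 / 2) * (x + t) ^ 2
        ≤ Real.exp (-t ^ 2 / 2 + -(x + t) ^ 2 / 2) * (x + t) ^ 2 :=
          mul_le_mul_of_nonneg_right key (sq_nonneg _)
      _ = Real.exp (-t ^ 2 / 2) * ((x + t) ^ 2 * Real.exp (-(x + t) ^ 2 / 2)) := by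
          rw [Real.exp_add]; ring
  · simp
  · have h2' : t < x := not_le.1 h2
    have key : Real.exp (-x ^ 2 / 2) ≤ Real.exp (-t ^ 2 / 2 + -(x - t) ^ 2 / 2) := by
      apply Real.exp_le_exp.2
      nlinarith
    calc Real.exp (-x ^ 2 / 2) * (x - t) ^ 2
        ≤ Real.exp (-t ^ 2 / 2 + -(x - t) ^ 2 / 2) * (x - t) ^ 2 :=
          mul_le_mul_of_nonneg_right key (sq_nonneg _)
      _ = Real.exp (-t ^ 2 / 2) * ((x - t) ^ 2 * Real.exp (-(x - t) ^ 2 / 2)) := by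
          rw [Real.exp_add]; ring

lemma softThreshold_integral_eq (t : ℝ) (ht : 0 < t) :
    ∫ x : ℝ, softThreshold t x ^ 2 * Real.exp (-softThreshold t x ^ 2 / 2)
      = Real.sqrt (2 * π) := by
  have hint := softThreshold_sq_exp_integrable t
  rw [← intervalIntegral.integral_Iic_add_Ioi (b := t) hint.integrableOn hint.integrableOn]
  have hIoi : ∫ x in Ioi t, softThreshold t x ^ 2 * Real.exp (-softThreshold t x ^ 2 / 2)
      = Real.sqrt (2 * π) / 2 := by
    have e1 : ∫ x in Ioi t, softThreshold t x ^ 2 * Real.exp (-softThreshold t x ^ 2 / 2)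
        = ∫ x in Ioi t, (x - t) ^ 2 * Real.exp (-(x - t) ^ 2 / 2) := by
      refine setIntegral_congr_fun measurableSet_Ioi fun x hx => ?_
      have hx' : t < x := hx
      have hns : ¬ x < -t := by linarith
      have hns2 : ¬ x ≤ t := not_le.2 hx'
      simp only [softThreshold, if_neg hns, if_neg hns2]
    rw [e1]
    have hp := (measurePreserving_add_right volume t).setIntegral_preimage_emb
        (MeasurableEquiv.addRight t).measurableEmbedding
        (fun y => (y - t) ^ 2 * Real.exp (-(y - t) ^ 2 / 2)) (Ioi t)
    have hpre : (fun x : ℝ => x + t) ⁻¹' (Ioi t) = Ioi 0 := by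
      ext x; simp
    rw [hpre] at hp
    rw [← hp]
    rw [show (∫ x in Ioi (0:ℝ), (x + t - t) ^ 2 * Real.exp (-(x + t - t) ^ 2 / 2))
        = ∫ x in Ioi (0:ℝ), x ^ 2 * Real.exp (-x ^ 2 / 2) from by
      refine setIntegral_congr_fun measurableSet_Ioi fun x _ => by
        simp [add_sub_cancel_right]]
    exact integral_sq_exp_Ioi
  have hIic : ∫ x in Iic t, softThreshold t x ^ 2 * Real.exp (-softThreshold t x ^ 2 / 2)
      = Real.sqrt (2 * π) / 2 := by
    have hsplit : Iic (-t) ∪ Ioc (-t) t = Iic t := Set.Iic_union_Ioc_eq_Iic (by linarith)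
    rw [← hsplit, setIntegral_union (Iic_disjoint_Ioc le_rfl) measurableSet_Ioc
      hint.integrableOn hint.integrableOn]
    have e0 : ∫ x in Ioc (-t) t, softThreshold t x ^ 2 * Real.exp (-softThreshold t x ^ 2 / 2)
        = 0 := by
      rw [show ∫ x in Ioc (-t) t, softThreshold t x ^ 2 * Real.exp (-softThreshold t x ^ 2 / 2)
          = ∫ _x in Ioc (-t) t, (0:ℝ) from
        setIntegral_congr_fun measurableSet_Ioc fun x hx => by
          simp only [softThreshold, if_neg (not_lt.2 hx.1.le), if_pos hx.2]
          norm_num]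
      simp
    have e1 : ∫ x in Iic (-t), softThreshold t x ^ 2 * Real.exp (-softThreshold t x ^ 2 / 2)
        = ∫ x in Iic (-t), (x + t) ^ 2 * Real.exp (-(x + t) ^ 2 / 2) := by
      refine setIntegral_congr_fun measurableSet_Iic fun x hx => ?_
      rcases lt_or_eq_of_le (mem_Iic.1 hx) with hlt | heq
      · simp only [softThreshold, if_pos hlt]
      · subst heq
        simp only [softThreshold, lt_irrefl, if_neg (lt_irrefl _), if_pos (by linarith : -t ≤ t)]
        norm_num
    rw [e0, e1, add_zero]
    have hp := (measurePreserving_add_right volume (-t)).setIntegral_preimage_emb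
        (MeasurableEquiv.addRight (-t)).measurableEmbedding
        (fun y => (y + t) ^ 2 * Real.exp (-(y + t) ^ 2 / 2)) (Iic (-t))
    have hpre : (fun x : ℝ => x + -t) ⁻¹' (Iic (-t)) = Iic 0 := by
      ext x; simp
    rw [hpre] at hp
    rw [← hp]
    rw [show (∫ x in Iic (0:ℝ), (x + -t + t) ^ 2 * Real.exp (-(x + -t + t) ^ 2 / 2))
        = ∫ x in Iic (0:ℝ), x ^ 2 * Real.exp (-x ^ 2 / 2) from by
      refine setIntegral_congr_fun measurableSet_Iic fun x _ => by
        simp [neg_add_cancel_right]]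
    have hneg := integral_comp_neg_Ioi (c := (0:ℝ)) (f := fun x => x ^ 2 * Real.exp (-x ^ 2 / 2))
    rw [neg_zero] at hneg
    rw [← hneg]
    rw [show (∫ x in Ioi (0:ℝ), (-x) ^ 2 * Real.exp (-(-x) ^ 2 / 2))
        = ∫ x in Ioi (0:ℝ), x ^ 2 * Real.exp (-x ^ 2 / 2) from by
      refine setIntegral_congr_fun measurableSet_Ioi fun x _ => by
        simp [neg_sq]]
    exact integral_sq_exp_Ioi
  rw [hIoi, hIic]
  ring

theorem expectation_soft_threshold_sq_le (t : ℝ) (ht : 0 < t) :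
    ∫ x, (softThreshold t x) ^ 2 ∂(gaussianReal 0 1) ≤ Real.exp (-t ^ 2 / 2) := by
  have hS := measurable_softThreshold t
  have hmeq : gaussianReal 0 1
      = (volume : Measure ℝ).withDensity (fun x => ((gaussianPDFReal 0 1 x).toNNReal : ℝ≥0∞)) := by
    rw [gaussianReal_of_var_ne_zero 0 one_ne_zero]
    rfl
  rw [hmeq, integral_withDensity_eq_integral_smul
    ((measurable_gaussianPDFReal 0 1).real_toNNReal) _]
  have hpdf : ∀ x : ℝ, ((gaussianPDFReal 0 1 x).toNNReal : ℝ)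
      = (Real.sqrt (2 * π))⁻¹ * Real.exp (-x ^ 2 / 2) := by
    intro x
    rw [Real.coe_toNNReal _ (gaussianPDFReal_nonneg 0 1 x)]
    rw [gaussianPDFReal]
    norm_num
  have hc : (0:ℝ) < Real.sqrt (2 * π) := Real.sqrt_pos.2 (by positivity)
  have key : ∫ x : ℝ, ((gaussianPDFReal 0 1 x).toNNReal : ℝ≥0) • softThreshold t x ^ 2
      ≤ ∫ x : ℝ, Real.exp (-t ^ 2 / 2) * ((Real.sqrt (2 * π))⁻¹ *
          (softThreshold t x ^ 2 * Real.exp (-softThreshold t x ^ 2 / 2))) := by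
    refine integral_mono_of_nonneg (Filter.Eventually.of_forall fun x => ?_)
      (((softThreshold_sq_exp_integrable t).const_mul _).const_mul _)
      (Filter.Eventually.of_forall fun x => ?_)
    · have := gaussianPDFReal_nonneg 0 1 x
      simp only [NNReal.smul_def, smul_eq_mul]
      positivity
    · simp only [NNReal.smul_def, smul_eq_mul, hpdf]
      calc (Real.sqrt (2 * π))⁻¹ * Real.exp (-x ^ 2 / 2) * softThreshold t x ^ 2
          = (Real.sqrt (2 * π))⁻¹ * (Real.exp (-x ^ 2 / 2) * softThreshold t x ^ 2) := by ring
        _ ≤ (Real.sqrt (2 * π))⁻¹ * (Real.exp (-t ^ 2 / 2) *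
              (softThreshold t x ^ 2 * Real.exp (-softThreshold t x ^ 2 / 2))) := by
            exact mul_le_mul_of_nonneg_left (softThreshold_pointwise t ht x)
              (by positivity)
        _ = Real.exp (-t ^ 2 / 2) * ((Real.sqrt (2 * π))⁻¹ *
              (softThreshold t x ^ 2 * Real.exp (-softThreshold t x ^ 2 / 2))) := by ring
  refine le_trans key ?_
  rw [integral_const_mul, integral_const_mul, softThreshold_integral_eq t ht]
  rw [inv_mul_cancel₀ (ne_of_gt hc), mul_one]
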